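/- Let K be a linearly ordered field, n ≥ 2, let v and w be totally positive upper triangular n×n matrices over K of determinant one, and let x_1, …, x_n ∈ K all be strictly positive. Set y_i = (v⁻¹)_{i,n} and z_i = ((w·v)⁻¹)_{i,n} for i = 1, …, n. Then all y_i and z_i are nonzero, and for every a = 1, …, n−1: −(x_{a+1} · y_a)/(x_a · y_{a+1}) < −(x_{a+1} · z_a)/(x_a · z_{a+1}). (This is the coordinate form of the inequality D_a(F_1, F_3, F_2, F_4) < D_a(F_1, F_3, F_2, F_5) between the a-th double ratios of a positive 5-tuple of flags (F_1, …, F_5), written in a basis whose ascending flag is F_1 and descending flag is F_3, with F_2 = uF_1 for u totally positive lower triangular with first column x, F_4 = v⁻¹F_3 and F_5 = v⁻¹w⁻¹F_3.) -/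

import Mathlib

/-- An upper triangular matrix is totally positive upper triangular if every minor on rows
`i₁ < … < i_p` and columns `j₁ < … < j_p` with `i_k ≤ j_k` for all `k` is strictly positive. -/
def IsTotallyPositiveUpper {K : Type*} [Field K] [LinearOrder K] [IsStrictOrderedRing K] {n : ℕ}
    (A : Matrix (Fin n) (Fin n) K) : Prop :=
  (∀ i j : Fin n, j < i → A i j = 0) ∧
  ∀ (p : ℕ) (r c : Fin p → Fin n), StrictMono r → StrictMono c → (∀ k, r k ≤ c k) →
    0 < (A.submatrix r c).det

section Aux
variable {K : Type*} [Field K] [LinearOrder K] [IsStrictOrderedRing K]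

lemma sign_helper (p q r : ℕ) (h : (p + q) % 2 = r % 2) :
    (-1 : K) ^ p * (-1 : K) ^ q = (-1 : K) ^ r := by
  rw [← pow_add, neg_one_pow_eq_pow_mod_two, h, ← neg_one_pow_eq_pow_mod_two]

lemma det_submatrix_eq_zero_of_triangular {n p : ℕ}
    {A : Matrix (Fin n) (Fin n) K} (hA : ∀ i j : Fin n, j < i → A i j = 0)
    {r c : Fin p → Fin n} (hr : Monotone r) (hc : Monotone c)
    {k : Fin p} (hk : c k < r k) : (A.submatrix r c).det = 0 := by
  rw [Matrix.det_apply]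
  apply Finset.sum_eq_zero
  intro σ _
  have hex : ∃ q : Fin p, q ≤ k ∧ k ≤ σ q := by
    by_contra h
    push_neg at h
    have hcard : (Finset.Iic k).card ≤ (Finset.Iio k).card := by
      apply Finset.card_le_card_of_injOn σ
      · intro q hq
        simp only [Finset.mem_coe, Finset.mem_Iic] at hq
        simp only [Finset.mem_coe, Finset.mem_Iio]
        exact h q hq
      · exact σ.injective.injOn
    rw [Fin.card_Iic, Fin.card_Iio] at hcard
    omega
  obtain ⟨q, hq1, hq2⟩ := hex
  have hz : A (r (σ q)) (c q) = 0 :=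
    hA _ _ (lt_of_le_of_lt (hc hq1) (lt_of_lt_of_le hk (hr hq2)))
  have hprod : ∏ i, A.submatrix r c (σ i) i = 0 :=
    Finset.prod_eq_zero (Finset.mem_univ q) hz
  rw [hprod, smul_zero]

lemma det_of_unit_column {m : ℕ} (M : Matrix (Fin (m+1)) (Fin (m+1)) K)
    (a i : Fin (m+1)) (h : ∀ r, M r a = if r = i then 1 else 0) :
    M.det = (-1) ^ ((i:ℕ) + (a:ℕ)) * (M.submatrix i.succAbove a.succAbove).det := by
  rw [Matrix.det_succ_column M a]
  rw [Fintype.sum_eq_single i]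
  · rw [h, if_pos rfl, mul_one]
  · intro b hb
    rw [h, if_neg hb, mul_zero, zero_mul]

lemma val_succAbove {m : ℕ} (i : Fin (m+1)) (k : Fin m) :
    ((i.succAbove k : Fin (m+1)) : ℕ) = if (k:ℕ) < (i:ℕ) then (k:ℕ) else (k:ℕ) + 1 := by
  rcases lt_or_ge (Fin.castSucc k) i with h | h
  · rw [Fin.succAbove_of_castSucc_lt _ _ h, Fin.coe_castSucc, if_pos]
    exact h
  · rw [Fin.succAbove_of_le_castSucc _ _ h, Fin.val_succ, if_neg]
    rw [Fin.le_def, Fin.coe_castSucc] at h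
    omega



lemma inv_entry {m : ℕ} (v : Matrix (Fin (m+1)) (Fin (m+1)) K) (hv1 : v.det = 1)
    (i j : Fin (m+1)) :
    v⁻¹ i j = (-1 : K) ^ ((i:ℕ) + (j:ℕ)) * (v.submatrix j.succAbove i.succAbove).det := by
  rw [Matrix.inv_def, hv1, Ring.inverse_one, one_smul,
    Matrix.adjugate_fin_succ_eq_det_submatrix, add_comm (j:ℕ)]

lemma inv_entry_pos {m : ℕ} {v : Matrix (Fin (m+1)) (Fin (m+1)) K}
    (hv : IsTotallyPositiveUpper v) (hv1 : v.det = 1) {i j : Fin (m+1)} (hij : i ≤ j) :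
    0 < (-1 : K) ^ ((i:ℕ) + (j:ℕ)) * v⁻¹ i j := by
  rw [inv_entry v hv1 i j, ← mul_assoc, ← pow_add]
  have hsq : (-1 : K) ^ ((i:ℕ) + (j:ℕ) + ((i:ℕ) + (j:ℕ))) = 1 := by
    rw [← two_mul, pow_mul, neg_one_sq, one_pow]
  rw [hsq, one_mul]
  refine hv.2 m _ _ (Fin.strictMono_succAbove j) (Fin.strictMono_succAbove i) ?_
  intro k
  rw [Fin.le_def, val_succAbove, val_succAbove]
  rw [Fin.le_def] at hij
  split <;> split <;> omega

lemma inv_entry_zero {m : ℕ} {v : Matrix (Fin (m+1)) (Fin (m+1)) K}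
    (hv : IsTotallyPositiveUpper v) (hv1 : v.det = 1) {i j : Fin (m+1)} (hji : j < i) :
    v⁻¹ i j = 0 := by
  rw [inv_entry v hv1 i j]
  have hji' := hji
  rw [Fin.lt_def] at hji'
  have hjm : (j:ℕ) < m := by
    have := i.isLt
    omega
  have hdz : (v.submatrix j.succAbove i.succAbove).det = 0 := by
    refine det_submatrix_eq_zero_of_triangular hv.1
      (Fin.strictMono_succAbove j).monotone (Fin.strictMono_succAbove i).monotone
      (k := ⟨(j:ℕ), hjm⟩) ?_
    rw [Fin.lt_def, val_succAbove, val_succAbove]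
    simp only
    split_ifs <;> omega
  rw [hdz, mul_zero]

set_option maxHeartbeats 1600000 in
lemma key_jacobi {m : ℕ} (v : Matrix (Fin (m+2)) (Fin (m+2)) K)
    (hv : IsTotallyPositiveUpper v) (hv1 : v.det = 1)
    (a : ℕ) (ha : a + 1 < m + 2) (j : Fin (m+2)) (hj : (j:ℕ) < m + 1) :
    ∃ G : K,
      (v⁻¹ ⟨a, by omega⟩ (Fin.last (m+1)) * v⁻¹ ⟨a+1, ha⟩ j
        - v⁻¹ ⟨a+1, ha⟩ (Fin.last (m+1)) * v⁻¹ ⟨a, by omega⟩ j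
        = (-1 : K) ^ ((m+1) + (j:ℕ)) * G)
      ∧ 0 ≤ G ∧ ((a:ℕ) ≤ (j:ℕ) → 0 < G) := by
  set A : Fin (m+2) := ⟨a, by omega⟩ with hAdef
  set Bf : Fin (m+2) := ⟨a+1, ha⟩ with hBdef
  set L : Fin (m+2) := Fin.last (m+1) with hLdef
  have hAv : (A:ℕ) = a := rfl
  have hBv : (Bf:ℕ) = a + 1 := rfl
  have hLv : (L:ℕ) = m + 1 := rfl
  have hAB : A ≠ Bf := by
    rw [Ne, Fin.ext_iff, hAv, hBv]
    omega
  have hmul : v * v⁻¹ = 1 := Matrix.mul_nonsing_inv v (by rw [hv1]; exact isUnit_one)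
  set R : Fin m → Fin (m+2) := fun k =>
    ⟨if (k:ℕ) < (j:ℕ) then (k:ℕ) else (k:ℕ)+1, by have := k.isLt; split <;> omega⟩ with hRdef
  set C : Fin m → Fin (m+2) := fun k =>
    ⟨if (k:ℕ) < a then (k:ℕ) else (k:ℕ)+2, by have := k.isLt; split <;> omega⟩ with hCdef
  have hRv : ∀ k : Fin m, ((R k : Fin (m+2)) : ℕ)
      = if (k:ℕ) < (j:ℕ) then (k:ℕ) else (k:ℕ)+1 := fun k => rfl
  have hCv : ∀ k : Fin m, ((C k : Fin (m+2)) : ℕ)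
      = if (k:ℕ) < a then (k:ℕ) else (k:ℕ)+2 := fun k => rfl
  have hmono_r : StrictMono R := by
    intro s t hst
    rw [Fin.lt_def] at hst ⊢
    rw [hRv, hRv]
    split_ifs <;> omega
  have hmono_c : StrictMono C := by
    intro s t hst
    rw [Fin.lt_def] at hst ⊢
    rw [hCv, hCv]
    split_ifs <;> omega
  refine ⟨(v.submatrix R C).det, ?_, ?_, ?_⟩
  · -- the determinant identity
    set p : Fin (m+2) → K := fun i => v⁻¹ i L - (1 : Matrix (Fin (m+2)) (Fin (m+2)) K) i A
      with hpdef
    set q : Fin (m+2) → K := fun i => v⁻¹ i j - (1 : Matrix (Fin (m+2)) (Fin (m+2)) K) i Bf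
      with hqdef
    set U : Matrix (Fin (m+2)) (Fin 2) K :=
      Matrix.of (fun i t => if t = 0 then p i else q i) with hUdef
    set V : Matrix (Fin 2) (Fin (m+2)) K :=
      Matrix.of (fun t s => if t = 0 then (1 : Matrix (Fin (m+2)) (Fin (m+2)) K) A s
        else (1 : Matrix (Fin (m+2)) (Fin (m+2)) K) Bf s) with hVdef
    have hU0 : ∀ i, U i 0 = p i := by
      intro i
      rw [hUdef, Matrix.of_apply, if_pos rfl]
    have hU1 : ∀ i, U i 1 = q i := by
      intro i
      rw [hUdef, Matrix.of_apply, if_neg (by decide : ¬ (1 : Fin 2) = 0)]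
    have hV0 : ∀ s, V 0 s = (1 : Matrix (Fin (m+2)) (Fin (m+2)) K) A s := by
      intro s
      rw [hVdef, Matrix.of_apply, if_pos rfl]
    have hV1 : ∀ s, V 1 s = (1 : Matrix (Fin (m+2)) (Fin (m+2)) K) Bf s := by
      intro s
      rw [hVdef, Matrix.of_apply, if_neg (by decide : ¬ (1 : Fin 2) = 0)]
    have hrow : ∀ (X : Fin (m+2)) (f : Fin (m+2) → K),
        (∑ i, (1 : Matrix (Fin (m+2)) (Fin (m+2)) K) X i * f i) = f X := by
      intro X f
      rw [Finset.sum_eq_single X]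
      · rw [Matrix.one_apply_eq, one_mul]
      · intro b _ hb
        rw [Matrix.one_apply_ne (Ne.symm hb), zero_mul]
      · intro h; exact absurd (Finset.mem_univ X) h
    set Cm : Matrix (Fin (m+2)) (Fin (m+2)) K := 1 + U * V with hCmdef
    have hC : ∀ i k, Cm i k =
        if k = A then v⁻¹ i L else if k = Bf then v⁻¹ i j
          else (1 : Matrix (Fin (m+2)) (Fin (m+2)) K) i k := by
      intro i k
      rw [hCmdef, Matrix.add_apply, Matrix.mul_apply, Fin.sum_univ_two, hU0, hU1, hV0, hV1]
      by_cases h1 : k = A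
      · subst h1
        rw [if_pos rfl, Matrix.one_apply_eq, Matrix.one_apply_ne (Ne.symm hAB), hpdef]
        ring
      · rw [if_neg h1]
        by_cases h2 : k = Bf
        · subst h2
          rw [if_pos rfl, Matrix.one_apply_eq, Matrix.one_apply_ne hAB, hqdef]
          ring
        · rw [if_neg h2, Matrix.one_apply_ne (fun h => h1 h.symm),
            Matrix.one_apply_ne (fun h => h2 h.symm)]
          ring
    have hdet2 : Cm.det = v⁻¹ A L * v⁻¹ Bf j - v⁻¹ A j * v⁻¹ Bf L := by
      rw [hCmdef, Matrix.det_one_add_mul_comm, Matrix.det_fin_two]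
      have e00 : (1 + V * U : Matrix (Fin 2) (Fin 2) K) 0 0 = 1 + p A := by
        rw [Matrix.add_apply, Matrix.one_apply_eq, Matrix.mul_apply]
        simp only [hV0, hU0]
        rw [hrow]
      have e01 : (1 + V * U : Matrix (Fin 2) (Fin 2) K) 0 1 = q A := by
        rw [Matrix.add_apply, Matrix.one_apply_ne (by decide : ¬ (0 : Fin 2) = 1),
          Matrix.mul_apply]
        simp only [hV0, hU1]
        rw [hrow, zero_add]
      have e10 : (1 + V * U : Matrix (Fin 2) (Fin 2) K) 1 0 = p Bf := by
        rw [Matrix.add_apply, Matrix.one_apply_ne (by decide : ¬ (1 : Fin 2) = 0),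
          Matrix.mul_apply]
        simp only [hV1, hU0]
        rw [hrow, zero_add]
      have e11 : (1 + V * U : Matrix (Fin 2) (Fin 2) K) 1 1 = 1 + q Bf := by
        rw [Matrix.add_apply, Matrix.one_apply_eq, Matrix.mul_apply]
        simp only [hV1, hU1]
        rw [hrow]
      rw [e00, e01, e10, e11]
      simp only [hpdef, hqdef]
      rw [Matrix.one_apply_eq, Matrix.one_apply_eq, Matrix.one_apply_ne hAB,
        Matrix.one_apply_ne (Ne.symm hAB)]
      ring
    set D : Matrix (Fin (m+2)) (Fin (m+2)) K := v * Cm with hDdef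
    have hD : ∀ i k, D i k =
        if k = A then (if i = L then (1:K) else 0)
        else if k = Bf then (if i = j then (1:K) else 0) else v i k := by
      intro i k
      rw [hDdef, Matrix.mul_apply]
      by_cases h1 : k = A
      · subst h1
        rw [if_pos rfl]
        have hs : ∀ s ∈ Finset.univ, v i s * Cm s A = v i s * v⁻¹ s L := by
          intro s _; rw [hC, if_pos rfl]
        rw [Finset.sum_congr rfl hs, ← Matrix.mul_apply, hmul, Matrix.one_apply]
      · rw [if_neg h1]
        by_cases h2 : k = Bf
        · subst h2
          rw [if_pos rfl]
          have hs : ∀ s ∈ Finset.univ, v i s * Cm s Bf = v i s * v⁻¹ s j := by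
            intro s _; rw [hC, if_neg (Ne.symm hAB), if_pos rfl]
          rw [Finset.sum_congr rfl hs, ← Matrix.mul_apply, hmul, Matrix.one_apply]
        · rw [if_neg h2]
          have hs : ∀ s ∈ Finset.univ,
              v i s * Cm s k = v i s * (1 : Matrix (Fin (m+2)) (Fin (m+2)) K) s k := by
            intro s _; rw [hC, if_neg h1, if_neg h2]
          rw [Finset.sum_congr rfl hs, ← Matrix.mul_apply, Matrix.mul_one]
    have hdetD : Cm.det = D.det := by
      rw [hDdef, Matrix.det_mul, hv1, one_mul]
    have hstep1 : D.det =
        (-1:K) ^ ((m+1) + a) * ((D.submatrix L.succAbove A.succAbove).det) :=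
      det_of_unit_column D A L (fun r => by rw [hD r A, if_pos rfl])
    set a₂ : Fin (m+1) := ⟨a, by omega⟩ with ha2def
    set i₂ : Fin (m+1) := ⟨(j:ℕ), hj⟩ with hi2def
    have ha2v : (a₂:ℕ) = a := rfl
    have hi2v : (i₂:ℕ) = (j:ℕ) := rfl
    have hAa₂ : A.succAbove a₂ = Bf := by
      rw [Fin.ext_iff, val_succAbove]
      show (if a < a then a else a + 1) = a + 1
      simp
    have hcol : ∀ r : Fin (m+1), (D.submatrix L.succAbove A.succAbove) r a₂ =
        if r = i₂ then 1 else 0 := by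
      intro r
      rw [Matrix.submatrix_apply, hAa₂, Fin.succAbove_last_apply, hD,
        if_neg (Ne.symm hAB), if_pos rfl]
      have hiff : r = i₂ ↔ Fin.castSucc r = j := by
        rw [Fin.ext_iff, Fin.ext_iff, Fin.coe_castSucc, hi2v]
      by_cases hr : r = i₂
      · rw [if_pos (hiff.mp hr), if_pos hr]
      · rw [if_neg (fun h => hr (hiff.mpr h)), if_neg hr]
    have hstep2 : (D.submatrix L.succAbove A.succAbove).det =
        (-1:K) ^ ((j:ℕ) + a) *
          ((D.submatrix L.succAbove A.succAbove).submatrix i₂.succAbove a₂.succAbove).det :=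
      det_of_unit_column _ a₂ i₂ hcol
    have hfin : (D.submatrix L.succAbove A.succAbove).submatrix i₂.succAbove a₂.succAbove =
        v.submatrix R C := by
      ext k l
      rw [Matrix.submatrix_apply, Matrix.submatrix_apply, Matrix.submatrix_apply]
      have hne1 : A.succAbove (a₂.succAbove l) ≠ A := Fin.succAbove_ne A _
      have hne2 : A.succAbove (a₂.succAbove l) ≠ Bf := by
        intro h
        rw [← hAa₂] at h
        exact Fin.succAbove_ne a₂ l (Fin.succAbove_right_injective h)
      rw [hD, if_neg hne1, if_neg hne2]
      have hr : L.succAbove (i₂.succAbove k) = R k := by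
        rw [Fin.ext_iff, Fin.succAbove_last_apply, Fin.coe_castSucc, val_succAbove]
      have hc : A.succAbove (a₂.succAbove l) = C l := by
        rw [Fin.ext_iff, val_succAbove, val_succAbove]
        show (if (if (l:ℕ) < a then (l:ℕ) else (l:ℕ)+1) < a
            then (if (l:ℕ) < a then (l:ℕ) else (l:ℕ)+1)
            else (if (l:ℕ) < a then (l:ℕ) else (l:ℕ)+1) + 1)
          = (if (l:ℕ) < a then (l:ℕ) else (l:ℕ)+2)
        split_ifs <;> omega
      rw [hr, hc]
    have hsg : (-1:K) ^ ((m+1) + a) * (-1:K) ^ ((j:ℕ) + a)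
        = (-1:K) ^ ((m+1) + (j:ℕ)) := sign_helper _ _ _ (by omega)
    have hgoal : v⁻¹ A L * v⁻¹ Bf j - v⁻¹ Bf L * v⁻¹ A j = Cm.det := by
      rw [hdet2]; ring
    rw [hgoal, hdetD, hstep1, hstep2, hfin, ← mul_assoc, hsg]
  · rcases le_or_gt a (j:ℕ) with haj | haj
    · refine le_of_lt (hv.2 m R C hmono_r hmono_c ?_)
      intro k
      rw [Fin.le_def, hRv, hCv]
      split_ifs <;> omega
    · have hjm : (j:ℕ) < m := by omega
      refine le_of_eq (det_submatrix_eq_zero_of_triangular hv.1 hmono_r.monotone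
        hmono_c.monotone (k := ⟨(j:ℕ), hjm⟩) ?_).symm
      rw [Fin.lt_def, hRv, hCv]
      simp only
      split_ifs <;> omega
  · intro haj
    refine hv.2 m R C hmono_r hmono_c ?_
    intro k
    rw [Fin.le_def, hRv, hCv]
    split_ifs <;> omega

lemma pos_ineq {xA xB Y1 Y2 Z1 Z2 : K} (hxA : 0 < xA) (hxB : 0 < xB)
    (hY2 : 0 < Y2) (hZ2 : 0 < Z2) (h : Y1 * Z2 < Z1 * Y2) :
    (xB * Y1) / (xA * Y2) < (xB * Z1) / (xA * Z2) := by
  rw [div_lt_div_iff₀ (mul_pos hxA hY2) (mul_pos hxA hZ2)]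
  nlinarith [mul_lt_mul_of_pos_left h (mul_pos hxA hxB)]

lemma final_ineq {e xA xB yA yB zA zB : K}
    (he : e = 1 ∨ e = -1) (hxA : 0 < xA) (hxB : 0 < xB)
    (hY1 : 0 < e * yA) (hY2 : 0 < -e * yB) (hZ1 : 0 < e * zA) (hZ2 : 0 < -e * zB)
    (hS : 0 < yA * zB - yB * zA) :
    -(xB * yA) / (xA * yB) < -(xB * zA) / (xA * zB) := by
  rcases he with rfl | rfl
  · rw [one_mul] at hY1 hZ1
    rw [show -(1:K) * yB = -yB by ring] at hY2
    rw [show -(1:K) * zB = -zB by ring] at hZ2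
    have e1 : -(xB * yA) / (xA * yB) = (xB * yA) / (xA * (-yB)) := by
      rw [mul_neg, div_neg, neg_div]
    have e2 : -(xB * zA) / (xA * zB) = (xB * zA) / (xA * (-zB)) := by
      rw [mul_neg, div_neg, neg_div]
    rw [e1, e2]
    exact pos_ineq hxA hxB hY2 hZ2 (by nlinarith [hS])
  · rw [show (-1:K) * yA = -yA by ring] at hY1
    rw [show (-1:K) * zA = -zA by ring] at hZ1
    rw [show -(-1:K) * yB = yB by ring] at hY2
    rw [show -(-1:K) * zB = zB by ring] at hZ2
    have e1 : -(xB * yA) / (xA * yB) = (xB * (-yA)) / (xA * yB) := by rw [mul_neg]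
    have e2 : -(xB * zA) / (xA * zB) = (xB * (-zA)) / (xA * zB) := by rw [mul_neg]
    rw [e1, e2]
    exact pos_ineq hxA hxB hY2 hZ2 (by nlinarith [hS])

end Aux


set_option maxHeartbeats 4000000 in
/-- Coordinate form of the inequality `D_a(F₁,F₃,F₂,F₄) < D_a(F₁,F₃,F₂,F₅)` between the
`a`-th double ratios of a positive 5-tuple of flags: with `y i = (v⁻¹)_{i,n}` and
`z i = ((w·v)⁻¹)_{i,n}`, all `y i, z i` are nonzero and
`−(x_{a+1}·y_a)/(x_a·y_{a+1}) < −(x_{a+1}·z_a)/(x_a·z_{a+1})` (0-based indexing below). -/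
theorem doubleRatio_strict_inequality_coordinates
    {K : Type*} [Field K] [LinearOrder K] [IsStrictOrderedRing K] {n : ℕ} (hn : 2 ≤ n)
    (v w : Matrix (Fin n) (Fin n) K)
    (hv : IsTotallyPositiveUpper v) (hw : IsTotallyPositiveUpper w)
    (hv1 : v.det = 1) (hw1 : w.det = 1)
    (x : Fin n → K) (hx : ∀ i, 0 < x i) :
    (∀ i : Fin n, v⁻¹ i ⟨n - 1, by omega⟩ ≠ 0 ∧ (w * v)⁻¹ i ⟨n - 1, by omega⟩ ≠ 0) ∧
    ∀ a : ℕ, ∀ ha : a + 1 < n,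
      -(x ⟨a + 1, ha⟩ * v⁻¹ ⟨a, by omega⟩ ⟨n - 1, by omega⟩) /
          (x ⟨a, by omega⟩ * v⁻¹ ⟨a + 1, ha⟩ ⟨n - 1, by omega⟩) <
        -(x ⟨a + 1, ha⟩ * (w * v)⁻¹ ⟨a, by omega⟩ ⟨n - 1, by omega⟩) /
          (x ⟨a, by omega⟩ * (w * v)⁻¹ ⟨a + 1, ha⟩ ⟨n - 1, by omega⟩) := by
  obtain ⟨m, rfl⟩ : ∃ m, n = m + 2 := ⟨n - 2, by omega⟩
  have hL : (⟨m + 2 - 1, by omega⟩ : Fin (m + 2)) = Fin.last (m + 1) := by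
    apply Fin.ext
    simp
  have hyP : ∀ i : Fin (m+2), 0 < (-1:K) ^ ((i:ℕ) + (m+1)) * v⁻¹ i (Fin.last (m+1)) :=
    fun i => inv_entry_pos hv hv1 (Fin.le_last i)
  have huP : ∀ j : Fin (m+2), 0 < (-1:K) ^ ((j:ℕ) + (m+1)) * w⁻¹ j (Fin.last (m+1)) :=
    fun j => inv_entry_pos hw hw1 (Fin.le_last j)
  have hzP : ∀ i : Fin (m+2), 0 < (-1:K) ^ ((i:ℕ) + (m+1)) * (w * v)⁻¹ i (Fin.last (m+1)) := by
    intro i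
    rw [Matrix.mul_inv_rev, Matrix.mul_apply, Finset.mul_sum]
    refine Finset.sum_pos' (fun j _ => ?_) ⟨Fin.last (m+1), Finset.mem_univ _, ?_⟩
    · rcases lt_or_ge j i with hji | hij
      · rw [inv_entry_zero hv hv1 hji, zero_mul, mul_zero]
      · have h1 : 0 < (-1:K) ^ ((i:ℕ) + (j:ℕ)) * v⁻¹ i j := inv_entry_pos hv hv1 hij
        have h2 := huP j
        have e : (-1:K) ^ ((i:ℕ) + (m+1)) * (v⁻¹ i j * w⁻¹ j (Fin.last (m+1)))
            = ((-1:K) ^ ((i:ℕ) + (j:ℕ)) * v⁻¹ i j)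
              * ((-1:K) ^ ((j:ℕ) + (m+1)) * w⁻¹ j (Fin.last (m+1))) := by
          rw [← sign_helper ((i:ℕ) + (j:ℕ)) ((j:ℕ) + (m+1)) ((i:ℕ) + (m+1)) (by omega)]
          ring
        rw [e]
        exact le_of_lt (mul_pos h1 h2)
    · have h1 := hyP i
      have h2 : 0 < (-1:K) ^ ((m+1) + (m+1)) * w⁻¹ (Fin.last (m+1)) (Fin.last (m+1)) :=
        inv_entry_pos hw hw1 (le_refl (Fin.last (m+1)))
      have e : (-1:K) ^ ((i:ℕ) + (m+1)) *
            (v⁻¹ i (Fin.last (m+1)) * w⁻¹ (Fin.last (m+1)) (Fin.last (m+1)))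
          = ((-1:K) ^ ((i:ℕ) + (m+1)) * v⁻¹ i (Fin.last (m+1)))
            * ((-1:K) ^ ((m+1) + (m+1)) * w⁻¹ (Fin.last (m+1)) (Fin.last (m+1))) := by
        have hq : (-1:K) ^ ((m+1) + (m+1)) = 1 := Even.neg_one_pow ⟨m+1, rfl⟩
        rw [hq]
        ring
      rw [e]
      exact mul_pos h1 h2
  constructor
  · intro i
    rw [hL]
    constructor
    · intro h0
      have hc := hyP i
      rw [h0, mul_zero] at hc
      exact lt_irrefl 0 hc
    · intro h0
      have hc := hzP i
      rw [h0, mul_zero] at hc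
      exact lt_irrefl 0 hc
  · intro a ha
    rw [hL]
    have hS : 0 < v⁻¹ ⟨a, by omega⟩ (Fin.last (m+1)) * (w * v)⁻¹ ⟨a+1, ha⟩ (Fin.last (m+1))
        - v⁻¹ ⟨a+1, ha⟩ (Fin.last (m+1)) * (w * v)⁻¹ ⟨a, by omega⟩ (Fin.last (m+1)) := by
      rw [Matrix.mul_inv_rev, Matrix.mul_apply, Matrix.mul_apply, Finset.mul_sum,
        Finset.mul_sum, ← Finset.sum_sub_distrib]
      refine Finset.sum_pos' (fun j _ => ?_) ⟨⟨a, by omega⟩, Finset.mem_univ _, ?_⟩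
      · by_cases hjL : j = Fin.last (m+1)
        · subst hjL
          have e0 : v⁻¹ ⟨a, by omega⟩ (Fin.last (m+1)) *
                (v⁻¹ ⟨a+1, ha⟩ (Fin.last (m+1)) * w⁻¹ (Fin.last (m+1)) (Fin.last (m+1)))
              - v⁻¹ ⟨a+1, ha⟩ (Fin.last (m+1)) *
                (v⁻¹ ⟨a, by omega⟩ (Fin.last (m+1)) * w⁻¹ (Fin.last (m+1)) (Fin.last (m+1)))
              = 0 := by ring
          exact le_of_eq e0.symm
        · have hj' : (j:ℕ) < m + 1 := by
            have h2 := j.isLt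
            rcases Nat.lt_or_ge (j:ℕ) (m+1) with h | h
            · exact h
            · exact absurd (Fin.ext (show (j:ℕ) = ((Fin.last (m+1) : Fin (m+2)) : ℕ) by
                simp; omega)) hjL
          obtain ⟨G, hG1, hG2, _⟩ := key_jacobi v hv hv1 a ha j hj'
          have h2 := huP j
          have e : v⁻¹ ⟨a, by omega⟩ (Fin.last (m+1)) * (v⁻¹ ⟨a+1, ha⟩ j * w⁻¹ j (Fin.last (m+1)))
              - v⁻¹ ⟨a+1, ha⟩ (Fin.last (m+1)) * (v⁻¹ ⟨a, by omega⟩ j * w⁻¹ j (Fin.last (m+1)))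
              = G * ((-1:K) ^ ((j:ℕ) + (m+1)) * w⁻¹ j (Fin.last (m+1))) := by
            linear_combination (w⁻¹ j (Fin.last (m+1))) * hG1
          exact le_of_le_of_eq (mul_nonneg hG2 (le_of_lt h2)) e.symm
      · have hjA : ((⟨a, by omega⟩ : Fin (m + 2)) : ℕ) < m + 1 := by
          show a < m + 1
          omega
        obtain ⟨G, hG1, hG2, hG3⟩ := key_jacobi v hv hv1 a ha ⟨a, by omega⟩ hjA
        have h2 : 0 < (-1:K) ^ (a + (m+1)) * w⁻¹ ⟨a, by omega⟩ (Fin.last (m+1)) :=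
          huP ⟨a, by omega⟩
        have hGpos : 0 < G := hG3 (Nat.le_refl a)
        have e : v⁻¹ ⟨a, by omega⟩ (Fin.last (m+1)) *
              (v⁻¹ ⟨a+1, ha⟩ ⟨a, by omega⟩ * w⁻¹ ⟨a, by omega⟩ (Fin.last (m+1)))
            - v⁻¹ ⟨a+1, ha⟩ (Fin.last (m+1)) *
              (v⁻¹ ⟨a, by omega⟩ ⟨a, by omega⟩ * w⁻¹ ⟨a, by omega⟩ (Fin.last (m+1)))
            = G * ((-1:K) ^ (a + (m+1)) * w⁻¹ ⟨a, by omega⟩ (Fin.last (m+1))) := by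
          linear_combination (w⁻¹ (⟨a, by omega⟩ : Fin (m+2)) (Fin.last (m+1))) * hG1
        exact lt_of_lt_of_eq (mul_pos hGpos h2) e.symm
    have hedisj : (-1:K) ^ (a + (m+1)) = 1 ∨ (-1:K) ^ (a + (m+1)) = -1 := by
      rcases Nat.even_or_odd (a + (m+1)) with h | h
      · exact Or.inl (Even.neg_one_pow h)
      · exact Or.inr (Odd.neg_one_pow h)
    have hexp1 : (-1:K) ^ ((a+1) + (m+1)) = -(-1:K) ^ (a + (m+1)) := by
      rw [show (a+1) + (m+1) = (a + (m+1)) + 1 by omega, pow_succ]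
      ring
    have hY1 : 0 < (-1:K) ^ (a + (m+1)) * v⁻¹ ⟨a, by omega⟩ (Fin.last (m+1)) :=
      hyP ⟨a, by omega⟩
    have hY2 : 0 < (-1:K) ^ ((a+1) + (m+1)) * v⁻¹ ⟨a+1, ha⟩ (Fin.last (m+1)) :=
      hyP ⟨a+1, ha⟩
    have hZ1 : 0 < (-1:K) ^ (a + (m+1)) * (w * v)⁻¹ ⟨a, by omega⟩ (Fin.last (m+1)) :=
      hzP ⟨a, by omega⟩
    have hZ2 : 0 < (-1:K) ^ ((a+1) + (m+1)) * (w * v)⁻¹ ⟨a+1, ha⟩ (Fin.last (m+1)) :=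
      hzP ⟨a+1, ha⟩
    rw [hexp1] at hY2 hZ2
    exact final_ineq hedisj (hx _) (hx _) hY1 hY2 hZ1 hZ2 hS
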